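/- Fix t > 0 and let f be a continuous complex-valued function on the circle {z ∈ ℂ : |z| = t}. Then f extends to a continuous function on the closed disc {|z| ≤ t} that is holomorphic on the open disc {|z| < t} if and only if ∫₀^{2π} f(t e^{iθ}) e^{i(k+1)θ} dθ = 0 for every integer k ≥ 0. -/

import Mathlib

open Metric Complex Real intervalIntegral Filter Topology

lemma exp_two_pi_int (n : ℤ) : Complex.exp ((n : ℂ) * (2*π) * I) = 1 := by
  convert Complex.exp_int_mul_two_pi_mul_I n using 2
  ring

lemma exp_pow_integral (k : ℕ) (a : ℝ) (ha : a = 1 ∨ a = -1) :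
    ∫ φ in (0:ℝ)..(2*π), (Complex.exp (a * φ * I))^(k+1) = 0 := by
  have key : ∀ φ : ℝ, (Complex.exp (a * φ * I))^(k+1)
      = Complex.exp (((k+1 : ℕ) * a * I) * φ) := by
    intro φ
    rw [← Complex.exp_nat_mul]
    ring_nf
  have hk1 : ((k:ℂ) + 1) ≠ 0 := Nat.cast_add_one_ne_zero k
  have hc : ((k+1 : ℕ) * a * I : ℂ) ≠ 0 := by
    rcases ha with h | h <;> simp [h, I_ne_zero, mul_ne_zero] <;>
      intro hh <;> apply hk1 <;> [linear_combination hh; linear_combination -hh]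
  rw [intervalIntegral.integral_congr (fun φ _ => key φ),
    integral_exp_mul_complex hc]
  have h1 : Complex.exp ((((k+1:ℕ)) * (a:ℂ) * I) * ((2*π : ℝ) : ℂ)) = 1 := by
    rcases ha with h | h
    · rw [show (((k+1:ℕ)) * (a:ℂ) * I) * ((2*π : ℝ):ℂ) = (((k+1:ℕ):ℤ) : ℂ) * (2*π) * I by
        rw [h]; push_cast; ring]
      exact exp_two_pi_int _
    · rw [show (((k+1:ℕ)) * (a:ℂ) * I) * ((2*π : ℝ):ℂ) = ((-((k+1:ℕ):ℤ) : ℤ) : ℂ) * (2*π) * I by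
        rw [h]; push_cast; ring]
      exact exp_two_pi_int _
  rw [h1]
  simp


lemma geom_aux (z : ℂ) (hz : z ≠ 1) (N : ℕ) :
    z / (1 - z) = (∑ k ∈ Finset.range N, z^(k+1)) + z^(N+1)/(1-z) := by
  have h3 : (1:ℂ) - z ≠ 0 := sub_ne_zero.mpr (Ne.symm hz)
  have h2 : (∑ k ∈ Finset.range N, z^(k+1)) = z * ((z^N - 1) / (z - 1)) := by
    rw [← geom_sum_eq hz, Finset.mul_sum]
    congr 1; ext k; ring
  rw [h2]
  have h4 : z - 1 ≠ 0 := sub_ne_zero.mpr hz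
  field_simp
  ring

lemma tail_integral_zero (h : ℝ → ℂ) (hc : Continuous h) (v : ℂ) (hv : ‖v‖ < 1)
    (e : ℝ → ℂ) (hecont : Continuous e) (hnorme : ∀ φ, ‖e φ‖ = 1)
    (hmom : ∀ k : ℕ, ∫ φ in (0:ℝ)..(2*π), h φ * (e φ)^(k+1) = 0) :
    ∫ φ in (0:ℝ)..(2*π), h φ * ((v * e φ) / (1 - v * e φ)) = 0 := by
  set u : ℝ → ℂ := fun φ => v * e φ with hu
  have hucont : Continuous u := continuous_const.mul hecont
  have hnormu : ∀ φ, ‖u φ‖ = ‖v‖ := by intro φ; rw [hu]; simp [hnorme φ]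
  have hne : ∀ φ, (1 : ℂ) - u φ ≠ 0 := by
    intro φ hz
    rw [sub_eq_zero] at hz
    have h1 : ‖(1:ℂ)‖ = ‖u φ‖ := by rw [hz]
    rw [norm_one, hnormu φ] at h1
    linarith
  have hden : Continuous (fun φ => (1 : ℂ) - u φ) := continuous_const.sub hucont
  have hone : ∀ φ, u φ ≠ 1 := fun φ hz => hne φ (by rw [hz]; ring)
  have hgeom : ∀ (N : ℕ) (φ : ℝ),
      u φ / (1 - u φ) = (∑ k ∈ Finset.range N, (u φ)^(k+1)) + (u φ)^(N+1) / (1 - u φ) :=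
    fun N φ => geom_aux (u φ) (hone φ) N
  obtain ⟨M, hM⟩ := (isCompact_uIcc (a := (0:ℝ)) (b := 2*π)).exists_bound_of_continuousOn
    hc.continuousOn
  have hM0 : 0 ≤ M := le_trans (norm_nonneg _) (hM 0 Set.left_mem_uIcc)
  set ρ := ‖v‖ with hρ
  have hρ0 : 0 ≤ ρ := norm_nonneg _
  have hρ1 : ρ < 1 := hv
  have hint : ∀ (w : ℝ → ℂ), Continuous w →
      IntervalIntegrable (fun φ => h φ * w φ) MeasureTheory.volume 0 (2*π) :=
    fun w hw => (hc.mul hw).intervalIntegrable _ _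
  set I₀ := ∫ φ in (0:ℝ)..(2*π), h φ * (u φ / (1 - u φ)) with hI₀
  have key : ∀ N : ℕ, ‖I₀‖ ≤ (2*π) * (M * ρ^(N+1) / (1-ρ)) := by
    intro N
    have hA : IntervalIntegrable (fun φ => h φ * (∑ k ∈ Finset.range N, (u φ)^(k+1)))
        MeasureTheory.volume 0 (2*π) := (hc.mul (by fun_prop)).intervalIntegrable _ _
    have hB : IntervalIntegrable (fun φ => h φ * ((u φ)^(N+1) / (1 - u φ)))
        MeasureTheory.volume 0 (2*π) :=
      (hc.mul ((hucont.pow _).div hden hne)).intervalIntegrable _ _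
    have hsplit : I₀ = (∫ φ in (0:ℝ)..(2*π), h φ * (∑ k ∈ Finset.range N, (u φ)^(k+1)))
        + ∫ φ in (0:ℝ)..(2*π), h φ * ((u φ)^(N+1) / (1 - u φ)) := by
      rw [hI₀, ← intervalIntegral.integral_add hA hB]
      exact intervalIntegral.integral_congr fun φ _ => by rw [← mul_add, ← hgeom N φ]
    have hfirst : (∫ φ in (0:ℝ)..(2*π), h φ * (∑ k ∈ Finset.range N, (u φ)^(k+1))) = 0 := by
      have heq : ∀ φ, h φ * (∑ k ∈ Finset.range N, (u φ)^(k+1))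
          = ∑ k ∈ Finset.range N, v^(k+1) * (h φ * (e φ)^(k+1)) := by
        intro φ
        rw [Finset.mul_sum]
        congr 1; ext k
        rw [hu]; ring
      rw [intervalIntegral.integral_congr (fun φ _ => heq φ),
        intervalIntegral.integral_finset_sum]
      · apply Finset.sum_eq_zero
        intro k _
        rw [intervalIntegral.integral_const_mul, hmom k, mul_zero]
      · intro k _
        exact (continuous_const.mul (hc.mul (hecont.pow _))).intervalIntegrable _ _
    rw [hsplit, hfirst, zero_add]
    have hbound : ∀ φ ∈ Set.uIcc (0:ℝ) (2*π), ‖h φ * ((u φ)^(N+1) / (1 - u φ))‖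
        ≤ M * ρ^(N+1) / (1-ρ) := by
      intro φ hφ
      rw [norm_mul, norm_div, norm_pow, hnormu φ]
      have hden_ge : 1 - ρ ≤ ‖(1:ℂ) - u φ‖ := by
        have h4 := norm_sub_norm_le (1:ℂ) (u φ)
        rw [norm_one, hnormu φ] at h4
        linarith [le_abs_self (1 - ρ)]
      have h1ρ : (0:ℝ) < 1 - ρ := by linarith
      have h5 : ρ^(N+1) / ‖(1:ℂ) - u φ‖ ≤ ρ^(N+1) / (1-ρ) :=
        div_le_div_of_nonneg_left (by positivity) h1ρ hden_ge
      calc ‖h φ‖ * (ρ^(N+1) / ‖(1:ℂ) - u φ‖) ≤ M * (ρ^(N+1) / (1-ρ)) :=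
            mul_le_mul (hM φ hφ) h5 (by positivity) hM0
        _ = M * ρ^(N+1) / (1-ρ) := by ring
    have h6 := intervalIntegral.norm_integral_le_of_norm_le_const
      (C := M * ρ^(N+1) / (1-ρ)) (f := fun φ => h φ * ((u φ)^(N+1) / (1 - u φ)))
      (a := 0) (b := 2*π)
      (fun φ hφ => hbound φ (Set.uIoc_subset_uIcc hφ))
    have h7 : |2*π - 0| = 2*π := by
      rw [sub_zero]; exact abs_of_pos (by positivity)
    rw [h7] at h6
    calc ‖_‖ ≤ M * ρ^(N+1)/(1-ρ) * (2*π) := h6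
      _ = (2*π) * (M * ρ^(N+1)/(1-ρ)) := by ring
  have h0 : Tendsto (fun N : ℕ => ρ^(N+1)) atTop (𝓝 0) :=
    (tendsto_pow_atTop_nhds_zero_of_lt_one hρ0 hρ1).comp (tendsto_add_atTop_nat 1)
  have htend : Tendsto (fun N : ℕ => (2*π) * (M * ρ^(N+1) / (1-ρ))) atTop (𝓝 0) := by
    have h8 := h0.const_mul ((2*π) * M / (1-ρ))
    rw [mul_zero] at h8
    convert h8 using 2 with N
    ring
  have hle : ‖I₀‖ ≤ 0 := ge_of_tendsto' htend key
  exact norm_le_zero_iff.mp hle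

lemma normSq_one_sub_exp (s x : ℝ) :
    Complex.normSq (1 - (s:ℂ) * Complex.exp (-(x:ℂ) * I)) = 1 - 2*s*Real.cos x + s^2 := by
  have h : Complex.exp (-(x:ℂ)*I) = Complex.exp (((-x : ℝ):ℂ) * I) := by push_cast; ring_nf
  rw [h, Complex.normSq_apply]
  simp only [Complex.sub_re, Complex.sub_im, Complex.mul_re, Complex.mul_im,
    Complex.one_re, Complex.one_im, Complex.ofReal_re, Complex.ofReal_im,
    Complex.exp_ofReal_mul_I_re, Complex.exp_ofReal_mul_I_im, Real.cos_neg, Real.sin_neg]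
  nlinarith [Real.sin_sq_add_cos_sq x]

lemma poisson_split (u : ℂ) (hu : ‖u‖ < 1) :
    ((((1 - Complex.normSq u) / Complex.normSq (1 - u)) : ℝ) : ℂ)
      = (1 - u)⁻¹ + ((starRingEnd ℂ) u) / (1 - (starRingEnd ℂ) u) := by
  have h1 : (1:ℂ) - u ≠ 0 := by
    intro hz; rw [sub_eq_zero] at hz
    have : ‖(1:ℂ)‖ = ‖u‖ := by rw [hz]
    rw [norm_one] at this; linarith
  have h2 : (1:ℂ) - (starRingEnd ℂ) u ≠ 0 := by
    intro hz; rw [sub_eq_zero] at hz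
    have : ‖(1:ℂ)‖ = ‖(starRingEnd ℂ) u‖ := by rw [hz]
    rw [norm_one, RCLike.norm_conj] at this; linarith
  have e1 : ((Complex.normSq u : ℝ) : ℂ) = u * (starRingEnd ℂ) u := (Complex.mul_conj u).symm
  have e2 : ((Complex.normSq (1-u) : ℝ) : ℂ) = (1-u) * (1 - (starRingEnd ℂ) u) := by
    rw [← Complex.mul_conj]; simp [map_sub]
  have h3 : ((Complex.normSq (1-u) : ℝ) : ℂ) ≠ 0 := by
    rw [e2]; exact mul_ne_zero h1 h2
  rw [Complex.ofReal_div, Complex.ofReal_sub, Complex.ofReal_one, e1, e2]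
  field_simp
  ring

lemma exp_neg_form (φ : ℝ) : Complex.exp (((-1:ℝ):ℂ)*φ*I) = Complex.exp (-(φ:ℂ) * I) := by
  norm_num

lemma exp_pos_form (φ : ℝ) : Complex.exp (((1:ℝ):ℂ)*φ*I) = Complex.exp ((φ:ℂ) * I) := by
  norm_num

lemma cont_exp_neg : Continuous (fun φ : ℝ => Complex.exp (-(φ:ℂ) * I)) := by fun_prop

lemma cont_exp_pos : Continuous (fun φ : ℝ => Complex.exp ((φ:ℂ) * I)) := by fun_prop

lemma norm_exp_neg (φ : ℝ) : ‖Complex.exp (-(φ:ℂ) * I)‖ = 1 := by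
  rw [show (-(φ:ℂ) * I) = (((-φ:ℝ)):ℂ) * I by push_cast; ring]
  exact Complex.norm_exp_ofReal_mul_I _

lemma norm_exp_pos (φ : ℝ) : ‖Complex.exp ((φ:ℂ) * I)‖ = 1 :=
  Complex.norm_exp_ofReal_mul_I _

lemma mom_exp_neg (h : ℝ → ℂ) (hone : h = fun _ => 1) (k : ℕ) :
    ∫ φ in (0:ℝ)..(2*π), h φ * (Complex.exp (-(φ:ℂ) * I))^(k+1) = 0 := by
  subst hone
  have := exp_pow_integral k (-1) (Or.inr rfl)
  rw [← this]
  apply intervalIntegral.integral_congr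
  intro φ _
  simp only []
  rw [one_mul, exp_neg_form]

lemma mom_exp_pos (h : ℝ → ℂ) (hone : h = fun _ => 1) (k : ℕ) :
    ∫ φ in (0:ℝ)..(2*π), h φ * (Complex.exp ((φ:ℂ) * I))^(k+1) = 0 := by
  subst hone
  have := exp_pow_integral k 1 (Or.inl rfl)
  rw [← this]
  apply intervalIntegral.integral_congr
  intro φ _
  simp only []
  rw [one_mul, exp_pos_form]

lemma one_sub_ne (w : ℂ) (hw : ‖w‖ < 1) (e : ℂ) (he : ‖e‖ = 1) : 1 - w * e ≠ 0 := by
  intro hz; rw [sub_eq_zero] at hz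
  have : ‖(1:ℂ)‖ = ‖w * e‖ := by rw [hz]
  rw [norm_one, norm_mul, he, mul_one] at this
  linarith

lemma poisson_mass (w : ℂ) (hw : ‖w‖ < 1) :
    ∫ φ in (0:ℝ)..(2*π),
      ((((1 - Complex.normSq w) / Complex.normSq (1 - w * Complex.exp (-(φ:ℂ) * I))) : ℝ) : ℂ)
      = 2*π := by
  have hsplit : ∀ φ : ℝ,
      ((((1 - Complex.normSq w) / Complex.normSq (1 - w * Complex.exp (-(φ:ℂ) * I))) : ℝ) : ℂ)
      = 1 + (w * Complex.exp (-(φ:ℂ) * I)) / (1 - w * Complex.exp (-(φ:ℂ) * I))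
        + ((starRingEnd ℂ) w * Complex.exp ((φ:ℂ) * I))
            / (1 - (starRingEnd ℂ) w * Complex.exp ((φ:ℂ) * I)) := by
    intro φ
    set u : ℂ := w * Complex.exp (-(φ:ℂ) * I) with hudef
    have hnu : ‖u‖ < 1 := by rw [hudef, norm_mul, norm_exp_neg, mul_one]; exact hw
    have hcu : (starRingEnd ℂ) u = (starRingEnd ℂ) w * Complex.exp ((φ:ℂ) * I) := by
      rw [hudef, map_mul, ← Complex.exp_conj]
      congr 2
      simp [map_mul, Complex.conj_I]
    have hnsq : Complex.normSq u = Complex.normSq w := by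
      rw [hudef, Complex.normSq_mul]
      have : Complex.normSq (Complex.exp (-(φ:ℂ) * I)) = 1 := by
        rw [Complex.normSq_eq_norm_sq, show ‖Complex.exp (-(φ:ℂ) * I)‖ = 1 from norm_exp_neg φ]
        norm_num
      rw [this, mul_one]
    have h1 : (1:ℂ) - u ≠ 0 := one_sub_ne w hw _ (norm_exp_neg φ)
    have hinv : (1 - u)⁻¹ = 1 + u / (1 - u) := by field_simp; ring
    rw [← hcu, ← hnsq, poisson_split u hnu, hinv]
  rw [intervalIntegral.integral_congr (fun φ _ => hsplit φ)]
  have h1 : IntervalIntegrable (fun _ : ℝ => (1:ℂ)) MeasureTheory.volume 0 (2*π) :=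
    intervalIntegrable_const
  have hne1 : ∀ φ : ℝ, (1:ℂ) - w * Complex.exp (-(φ:ℂ) * I) ≠ 0 :=
    fun φ => one_sub_ne w hw _ (norm_exp_neg φ)
  have hwc : ‖(starRingEnd ℂ) w‖ < 1 := by rw [RCLike.norm_conj]; exact hw
  have hne2 : ∀ φ : ℝ, (1:ℂ) - (starRingEnd ℂ) w * Complex.exp ((φ:ℂ) * I) ≠ 0 :=
    fun φ => one_sub_ne _ hwc _ (norm_exp_pos φ)
  have h2 : IntervalIntegrable
      (fun φ : ℝ => (w * Complex.exp (-(φ:ℂ) * I)) / (1 - w * Complex.exp (-(φ:ℂ) * I)))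
      MeasureTheory.volume 0 (2*π) := by
    apply Continuous.intervalIntegrable
    exact (continuous_const.mul cont_exp_neg).div (continuous_const.sub
      (continuous_const.mul cont_exp_neg)) hne1
  have h3 : IntervalIntegrable
      (fun φ : ℝ => ((starRingEnd ℂ) w * Complex.exp ((φ:ℂ) * I))
        / (1 - (starRingEnd ℂ) w * Complex.exp ((φ:ℂ) * I)))
      MeasureTheory.volume 0 (2*π) := by
    apply Continuous.intervalIntegrable
    exact (continuous_const.mul cont_exp_pos).div (continuous_const.sub
      (continuous_const.mul cont_exp_pos)) hne2
  rw [intervalIntegral.integral_add (h1.add h2) h3, intervalIntegral.integral_add h1 h2]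
  have e2 : (∫ φ in (0:ℝ)..(2*π),
      (w * Complex.exp (-(φ:ℂ) * I)) / (1 - w * Complex.exp (-(φ:ℂ) * I))) = 0 := by
    have := tail_integral_zero (fun _ => 1) continuous_const w hw
      (fun φ => Complex.exp (-(φ:ℂ) * I)) cont_exp_neg norm_exp_neg
      (mom_exp_neg _ rfl)
    rw [← this]
    apply intervalIntegral.integral_congr
    intro φ _; simp only []; rw [one_mul]
  have e3 : (∫ φ in (0:ℝ)..(2*π),
      ((starRingEnd ℂ) w * Complex.exp ((φ:ℂ) * I))
        / (1 - (starRingEnd ℂ) w * Complex.exp ((φ:ℂ) * I))) = 0 := by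
    have := tail_integral_zero (fun _ => 1) continuous_const ((starRingEnd ℂ) w) hwc
      (fun φ => Complex.exp ((φ:ℂ) * I)) cont_exp_pos norm_exp_pos
      (mom_exp_pos _ rfl)
    rw [← this]
    apply intervalIntegral.integral_congr
    intro φ _; simp only []; rw [one_mul]
  rw [e2, e3, add_zero, add_zero]
  simp

lemma poisson_mass_real (w : ℂ) (hw : ‖w‖ < 1) :
    ∫ φ in (0:ℝ)..(2*π),
      (1 - Complex.normSq w) / Complex.normSq (1 - w * Complex.exp (-(φ:ℂ) * I)) = 2*π := by
  have := poisson_mass w hw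
  rw [intervalIntegral.integral_ofReal] at this
  exact_mod_cast this


noncomputable def cauchyT (f : ℂ → ℂ) (t : ℝ) (z : ℂ) : ℂ :=
  (2*π*I : ℂ)⁻¹ • ∮ w in C(0, t), (w - z)⁻¹ • f w

lemma g_cont (t : ℝ) (ht : 0 < t) (f : ℂ → ℂ) (hf : ContinuousOn f (sphere (0:ℂ) t)) :
    Continuous (fun θ : ℝ => f (circleMap 0 t θ)) :=
  hf.comp_continuous (continuous_circleMap 0 t) (fun θ => circleMap_mem_sphere 0 ht.le θ)

lemma circleMap_eq (t : ℝ) (θ : ℝ) : circleMap 0 t θ = (t:ℂ) * Complex.exp ((θ:ℂ)*I) := by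
  simp [circleMap]

lemma hmom' (t : ℝ) (f : ℂ → ℂ)
    (hmom : ∀ k : ℕ, ∫ θ in (0:ℝ)..(2 * π),
      f ((t : ℂ) * Complex.exp (θ * Complex.I)) *
        Complex.exp ((k + 1 : ℕ) * θ * Complex.I) = 0) :
    ∀ k : ℕ, ∫ θ in (0:ℝ)..(2*π),
      f (circleMap 0 t θ) * (Complex.exp ((θ:ℂ)*I))^(k+1) = 0 := by
  intro k
  have hcongr : (∫ θ in (0:ℝ)..(2*π), f (circleMap 0 t θ) * (Complex.exp ((θ:ℂ)*I))^(k+1))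
      = ∫ θ in (0:ℝ)..(2 * π), f ((t : ℂ) * Complex.exp (θ * Complex.I)) *
          Complex.exp ((k + 1 : ℕ) * θ * Complex.I) := by
    apply intervalIntegral.integral_congr
    intro θ _
    simp only []
    rw [circleMap_eq]
    congr 1
    rw [← Complex.exp_nat_mul]
    ring_nf
  rw [hcongr]
  exact hmom k

lemma cauchyT_poisson (t : ℝ) (ht : 0 < t) (f : ℂ → ℂ)
    (hf : ContinuousOn f (sphere (0:ℂ) t))
    (hmom : ∀ k : ℕ, ∫ θ in (0:ℝ)..(2 * π),
      f ((t : ℂ) * Complex.exp (θ * Complex.I)) *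
        Complex.exp ((k + 1 : ℕ) * θ * Complex.I) = 0)
    (z : ℂ) (hz : ‖z‖ < t) :
    cauchyT f t z = (2*π : ℂ)⁻¹ * ∫ φ in (0:ℝ)..(2*π), f (circleMap 0 t φ) *
      ((((1 - Complex.normSq (z/t)) /
        Complex.normSq (1 - (z/t) * Complex.exp (-(φ:ℂ)*I))) : ℝ) : ℂ) := by
  have ht0 : (t:ℂ) ≠ 0 := by exact_mod_cast ht.ne'
  have hzt : ‖z/t‖ < 1 := by
    rw [norm_div, Complex.norm_real, Real.norm_eq_abs, abs_of_pos ht]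
    rw [div_lt_one ht]; exact hz
  have hvt : ‖(starRingEnd ℂ) (z/t)‖ < 1 := by rw [RCLike.norm_conj]; exact hzt
  have hgc := g_cont t ht f hf
  -- step 1: rewrite circle integral
  have step1 : cauchyT f t z = (2*π*I : ℂ)⁻¹ * (I * ∫ φ in (0:ℝ)..(2*π),
      f (circleMap 0 t φ) * (1 - (z/t) * Complex.exp (-(φ:ℂ)*I))⁻¹) := by
    rw [cauchyT, circleIntegral, smul_eq_mul]
    congr 1
    rw [← intervalIntegral.integral_const_mul]
    apply intervalIntegral.integral_congr
    intro φ _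
    simp only [deriv_circleMap, smul_eq_mul]
    have hcm : circleMap 0 t φ = (t:ℂ) * Complex.exp ((φ:ℂ)*I) := circleMap_eq t φ
    have hcm0 : circleMap 0 t φ ≠ 0 := by
      rw [hcm]; exact mul_ne_zero ht0 (Complex.exp_ne_zero _)
    have hsub : circleMap 0 t φ - z ≠ 0 := by
      intro hq
      rw [sub_eq_zero] at hq
      have : ‖circleMap 0 t φ‖ = ‖z‖ := by rw [hq]
      rw [hcm, norm_mul, norm_exp_pos, mul_one, Complex.norm_real,
        Real.norm_eq_abs, abs_of_pos ht] at this
      linarith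
    have hker : 1 - (z/t) * Complex.exp (-(φ:ℂ)*I)
        = (circleMap 0 t φ - z) / circleMap 0 t φ := by
      rw [hcm, neg_mul, Complex.exp_neg]
      have he0 : Complex.exp ((φ:ℂ)*I) ≠ 0 := Complex.exp_ne_zero _
      field_simp
    rw [hker]
    rw [inv_div]
    field_simp
  rw [step1]
  have hI : (2*π*I : ℂ)⁻¹ * I = (2*π : ℂ)⁻¹ := by
    have hπ : (π:ℂ) ≠ 0 := by exact_mod_cast Real.pi_ne_zero
    field_simp
  rw [← mul_assoc, hI]
  congr 1
  -- step 2: poisson split under the integral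
  have hsplit : ∀ φ : ℝ, f (circleMap 0 t φ) * (1 - (z/t) * Complex.exp (-(φ:ℂ)*I))⁻¹
      = f (circleMap 0 t φ) *
        ((((1 - Complex.normSq (z/t)) /
          Complex.normSq (1 - (z/t) * Complex.exp (-(φ:ℂ)*I))) : ℝ) : ℂ)
      - f (circleMap 0 t φ) *
          (((starRingEnd ℂ) (z/t) * Complex.exp ((φ:ℂ)*I))
            / (1 - (starRingEnd ℂ) (z/t) * Complex.exp ((φ:ℂ)*I))) := by
    intro φ
    set u : ℂ := (z/t) * Complex.exp (-(φ:ℂ)*I) with hudef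
    have hnu : ‖u‖ < 1 := by rw [hudef, norm_mul, norm_exp_neg, mul_one]; exact hzt
    have hcu : (starRingEnd ℂ) u = (starRingEnd ℂ) (z/t) * Complex.exp ((φ:ℂ) * I) := by
      rw [hudef, map_mul, ← Complex.exp_conj]
      congr 2
      simp [map_mul, Complex.conj_I]
    have hnsq : Complex.normSq u = Complex.normSq (z/t) := by
      rw [hudef, Complex.normSq_mul]
      have : Complex.normSq (Complex.exp (-(φ:ℂ) * I)) = 1 := by
        rw [Complex.normSq_eq_norm_sq,
          show ‖Complex.exp (-(φ:ℂ) * I)‖ = 1 from norm_exp_neg φ]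
        norm_num
      rw [this, mul_one]
    have := poisson_split u hnu
    rw [hnsq, hcu] at this
    rw [show (1 - (z/t) * Complex.exp (-(φ:ℂ)*I))⁻¹ = (1-u)⁻¹ from rfl]
    rw [show (1 - (z/t) * Complex.exp (-(φ:ℂ)*I)) = (1-u) from rfl]
    rw [eq_sub_iff_add_eq, ← mul_add, ← this]
  rw [intervalIntegral.integral_congr (fun φ _ => hsplit φ)]
  have hne2 : ∀ φ : ℝ, (1:ℂ) - (starRingEnd ℂ) (z/t) * Complex.exp ((φ:ℂ) * I) ≠ 0 :=
    fun φ => one_sub_ne _ hvt _ (norm_exp_pos φ)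
  have hintK : IntervalIntegrable (fun φ : ℝ => f (circleMap 0 t φ) *
      ((((1 - Complex.normSq (z/t)) /
        Complex.normSq (1 - (z/t) * Complex.exp (-(φ:ℂ)*I))) : ℝ) : ℂ))
      MeasureTheory.volume 0 (2*π) := by
    apply Continuous.intervalIntegrable
    apply hgc.mul
    apply Complex.continuous_ofReal.comp
    apply Continuous.div continuous_const
    · exact Complex.continuous_normSq.comp (by fun_prop)
    · intro φ
      have h1 : (1:ℂ) - (z/t) * Complex.exp (-(φ:ℂ)*I) ≠ 0 :=
        one_sub_ne _ hzt _ (norm_exp_neg φ)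
      exact Complex.normSq_pos.mpr h1 |>.ne'
  have hintT : IntervalIntegrable (fun φ : ℝ => f (circleMap 0 t φ) *
      (((starRingEnd ℂ) (z/t) * Complex.exp ((φ:ℂ)*I))
        / (1 - (starRingEnd ℂ) (z/t) * Complex.exp ((φ:ℂ)*I))))
      MeasureTheory.volume 0 (2*π) := by
    apply Continuous.intervalIntegrable
    exact hgc.mul ((continuous_const.mul cont_exp_pos).div
      (continuous_const.sub (continuous_const.mul cont_exp_pos)) hne2)
  rw [intervalIntegral.integral_sub hintK hintT]
  have hzero := tail_integral_zero (fun θ => f (circleMap 0 t θ)) hgc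
    ((starRingEnd ℂ) (z/t)) hvt (fun φ => Complex.exp ((φ:ℂ)*I)) cont_exp_pos
    norm_exp_pos (hmom' t f hmom)
  rw [hzero, sub_zero]

lemma cauchyT_differentiableOn (t : ℝ) (ht : 0 < t) (f : ℂ → ℂ)
    (hf : ContinuousOn f (sphere (0:ℂ) t)) :
    DifferentiableOn ℂ (cauchyT f t) (ball (0:ℂ) t) := by
  have hci : CircleIntegrable f 0 t := hf.circleIntegrable ht.le
  have hR : (0 : NNReal) < ⟨t, ht.le⟩ := by exact_mod_cast ht
  have h := hasFPowerSeriesOn_cauchy_integral (f := f) (c := 0) (R := ⟨t, ht.le⟩) hci hR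
  have hd := h.analyticOnNhd.differentiableOn
  have he : Metric.eball (0:ℂ) (ENNReal.ofNNReal ⟨t, ht.le⟩) = ball 0 t := Metric.eball_coe
  rw [he] at hd
  exact hd

lemma exp_neg_per (φ : ℝ) :
    Complex.exp (-((φ + 2*π : ℝ):ℂ) * I) = Complex.exp (-(φ:ℂ) * I) := by
  push_cast
  rw [show (-((φ:ℂ) + 2*π) * I) = -(φ:ℂ)*I + ((-1:ℤ):ℂ)*(2*π)*I by push_cast; ring,
    Complex.exp_add, exp_two_pi_int, mul_one]

lemma exp_pos_per (φ : ℝ) :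
    Complex.exp (((φ + 2*π : ℝ):ℂ) * I) = Complex.exp ((φ:ℂ) * I) := by
  push_cast
  rw [show (((φ:ℂ) + 2*π) * I) = (φ:ℂ)*I + ((1:ℤ):ℂ)*(2*π)*I by push_cast; ring,
    Complex.exp_add, exp_two_pi_int, mul_one]

lemma g_unif (t : ℝ) (ht : 0 < t) (f : ℂ → ℂ) (hf : ContinuousOn f (sphere (0:ℂ) t)) :
    ∀ ε > 0, ∃ δ > 0, ∀ θ x : ℝ, |x| ≤ δ →
      ‖f (circleMap 0 t (θ + x)) - f (circleMap 0 t θ)‖ ≤ ε := by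
  have hfu := (isCompact_sphere (0:ℂ) t).uniformContinuousOn_of_continuous hf
  rw [Metric.uniformContinuousOn_iff] at hfu
  intro ε hε
  obtain ⟨δ₀, hδ₀, H⟩ := hfu ε hε
  refine ⟨δ₀/(2*(t+1)), by positivity, ?_⟩
  intro θ x hx
  have hlip := (lipschitzWith_circleMap 0 t).dist_le_mul (θ + x) θ
  have hd : dist (θ + x) θ = |x| := by rw [Real.dist_eq]; congr 1; ring
  rw [hd] at hlip
  have hnn : (Real.nnabs t : ℝ) = t := by
    simp [Real.coe_nnabs, abs_of_pos ht]
  rw [hnn] at hlip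
  have hlt : dist (circleMap 0 t (θ + x)) (circleMap 0 t θ) < δ₀ := by
    have h1 : t * |x| ≤ t * (δ₀/(2*(t+1))) :=
      mul_le_mul_of_nonneg_left hx ht.le
    have h2 : t * (δ₀/(2*(t+1))) < δ₀ := by
      rw [mul_div_assoc']
      rw [div_lt_iff₀ (by positivity)]
      nlinarith
    linarith
  have := H _ (circleMap_mem_sphere 0 ht.le (θ + x)) _ (circleMap_mem_sphere 0 ht.le θ) hlt
  rw [dist_eq_norm] at this
  exact this.le

lemma g_bound (t : ℝ) (ht : 0 < t) (f : ℂ → ℂ) (hf : ContinuousOn f (sphere (0:ℂ) t)) :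
    ∃ M : ℝ, 0 ≤ M ∧ ∀ θ : ℝ, ‖f (circleMap 0 t θ)‖ ≤ M := by
  obtain ⟨M, hM⟩ := (isCompact_uIcc (a := (0:ℝ)) (b := 2*π)).exists_bound_of_continuousOn
    (g_cont t ht f hf).continuousOn
  refine ⟨M, le_trans (norm_nonneg _) (hM 0 Set.left_mem_uIcc), ?_⟩
  intro θ
  have hper : Function.Periodic (fun θ : ℝ => f (circleMap 0 t θ)) (2*π) :=
    fun θ => congrArg f (periodic_circleMap 0 t θ)
  obtain ⟨y, hy, hyeq⟩ := hper.exists_mem_Ico₀ (by positivity) θ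
  rw [show f (circleMap 0 t θ) = f (circleMap 0 t y) from hyeq]
  apply hM
  rw [Set.uIcc_of_le (by positivity)]
  exact Set.Ico_subset_Icc_self hy

set_option maxHeartbeats 1000000 in
lemma cauchyT_boundary_approx (t : ℝ) (ht : 0 < t) (f : ℂ → ℂ)
    (hf : ContinuousOn f (sphere (0:ℂ) t))
    (hmom : ∀ k : ℕ, ∫ θ in (0:ℝ)..(2 * π),
      f ((t : ℂ) * Complex.exp (θ * Complex.I)) *
        Complex.exp ((k + 1 : ℕ) * θ * Complex.I) = 0) :
    ∀ ε > 0, ∀ᶠ s : ℝ in 𝓝[<] (1:ℝ), 0 < s ∧ s < 1 ∧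
      ∀ θ : ℝ, ‖cauchyT f t ((s:ℂ) * circleMap 0 t θ) - f (circleMap 0 t θ)‖ ≤ ε := by
  intro ε hε
  set g : ℝ → ℂ := fun θ => f (circleMap 0 t θ) with hg
  have hgc : Continuous g := g_cont t ht f hf
  obtain ⟨M, hM0, hMg⟩ := g_bound t ht f hf
  obtain ⟨δ₁, hδ₁, hδH⟩ := g_unif t ht f hf (ε/2) (by positivity)
  set δ := min δ₁ π with hδdef
  have hδpos : 0 < δ := lt_min hδ₁ Real.pi_pos
  have hδπ : δ ≤ π := min_le_right _ _
  have hδδ₁ : δ ≤ δ₁ := min_le_left _ _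
  have hcosδ : Real.cos δ < 1 := by
    rcases lt_or_eq_of_le (Real.cos_le_one δ) with h | h
    · exact h
    · exfalso
      have := (Real.cos_eq_one_iff_of_lt_of_lt
        (by linarith [Real.pi_pos] : -(2*π) < δ) (by linarith [Real.pi_pos])).mp h
      linarith
  set ψ : ℝ → ℝ := fun s => (1 - s^2)/(1 - 2*s*Real.cos δ + s^2) with hψdef
  have hψlim : Tendsto ψ (𝓝[<] (1:ℝ)) (𝓝 0) := by
    have h1 : Tendsto (fun s : ℝ => 1 - s^2) (𝓝 1) (𝓝 0) := by
      have h := ((continuous_const (y := (1:ℝ))).sub (continuous_pow 2)).tendsto (1:ℝ)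
      simp at h
      exact h
    have h2 : Tendsto (fun s : ℝ => 1 - 2*s*Real.cos δ + s^2) (𝓝 1)
        (𝓝 (2 - 2*Real.cos δ)) := by
      have h : Continuous (fun s : ℝ => 1 - 2*s*Real.cos δ + s^2) := by fun_prop
      have h' := h.tendsto (1:ℝ)
      convert h' using 2
      ring
    have hne : (2 - 2*Real.cos δ) ≠ 0 := by linarith
    have := h1.div h2 hne
    rw [zero_div] at this
    exact this.mono_left nhdsWithin_le_nhds
  have hev1 : ∀ᶠ s : ℝ in 𝓝[<] (1:ℝ), ψ s < ε/(4*M+1) :=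
    hψlim.eventually (gt_mem_nhds (by positivity))
  have hev2 : ∀ᶠ s : ℝ in 𝓝[<] (1:ℝ), (1/2 : ℝ) < s :=
    eventually_nhdsWithin_of_eventually_nhds (eventually_gt_nhds (by norm_num))
  have hev3 : ∀ᶠ s : ℝ in 𝓝[<] (1:ℝ), s < 1 := eventually_mem_nhdsWithin.mono (fun s hs => hs)
  filter_upwards [hev1, hev2, hev3] with s hψs hs2 hs1
  have hs0 : 0 < s := by linarith
  refine ⟨hs0, hs1, ?_⟩
  intro θ
  -- setup
  have hsC : ‖((s:ℝ):ℂ)‖ < 1 := by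
    rw [Complex.norm_real, Real.norm_eq_abs, abs_of_pos hs0]; exact hs1
  set z : ℂ := (s:ℂ) * circleMap 0 t θ with hzdef
  have hznorm : ‖z‖ < t := by
    rw [hzdef, norm_mul, Complex.norm_real, Real.norm_eq_abs, abs_of_pos hs0]
    have : ‖circleMap 0 t θ‖ = t := by
      rw [show circleMap 0 t θ = (t:ℂ) * Complex.exp ((θ:ℂ)*I) from circleMap_eq t θ,
        norm_mul, norm_exp_pos, mul_one, Complex.norm_real, Real.norm_eq_abs, abs_of_pos ht]
    rw [this]
    nlinarith
  have ht0 : (t:ℂ) ≠ 0 := by exact_mod_cast ht.ne'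
  have hw0 : z/t = (s:ℂ) * Complex.exp ((θ:ℂ)*I) := by
    rw [hzdef, circleMap_eq t θ]
    field_simp
  have hzt : ‖z/t‖ < 1 := by
    rw [hw0, norm_mul, norm_exp_pos, mul_one]; exact hsC
  -- the kernel as a function of the shifted variable
  have hdenpos : ∀ x : ℝ, 0 < 1 - 2*s*Real.cos x + s^2 := by
    intro x
    rw [← normSq_one_sub_exp s x]
    exact Complex.normSq_pos.mpr (one_sub_ne _ hsC _ (norm_exp_neg x))
  set P : ℝ → ℝ := fun x => (1 - s^2)/(1 - 2*s*Real.cos x + s^2) with hPdef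
  have hPnn : ∀ x, 0 ≤ P x := by
    intro x
    apply div_nonneg _ (hdenpos x).le
    nlinarith
  have hPc : Continuous P :=
    continuous_const.div (by fun_prop) (fun x => (hdenpos x).ne')
  have hPfar : ∀ x : ℝ, δ ≤ |x| → |x| ≤ π → P x ≤ ψ s := by
    intro x h1 h2
    have hcos : Real.cos x ≤ Real.cos δ := by
      rw [← Real.cos_abs x]
      exact Real.cos_le_cos_of_nonneg_of_le_pi hδpos.le h2 h1
    exact div_le_div_of_nonneg_left (by nlinarith) (hdenpos δ) (by nlinarith)
  have hψnn : 0 ≤ ψ s := div_nonneg (by nlinarith) (hdenpos δ).le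
  -- Poisson representation and mass
  have hrep := cauchyT_poisson t ht f hf hmom z hznorm
  set K : ℝ → ℂ := fun φ => ((((1 - Complex.normSq (z/t)) /
    Complex.normSq (1 - (z/t) * Complex.exp (-(φ:ℂ)*I))) : ℝ) : ℂ) with hKdef
  have hKcont : Continuous K := by
    apply Complex.continuous_ofReal.comp
    apply Continuous.div continuous_const
    · exact Complex.continuous_normSq.comp (by fun_prop)
    · intro φ
      exact (Complex.normSq_pos.mpr (one_sub_ne _ hzt _ (norm_exp_neg φ))).ne'
  have hKint : IntervalIntegrable K MeasureTheory.volume 0 (2*π) :=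
    hKcont.intervalIntegrable _ _
  have hmass : (∫ φ in (0:ℝ)..(2*π), K φ) = 2*π := poisson_mass (z/t) hzt
  have hgθ : (g θ : ℂ) = (2*π:ℂ)⁻¹ * ∫ φ in (0:ℝ)..(2*π), g θ * K φ := by
    have h2πc : (2*(π:ℂ)) ≠ 0 := by
      have : (π:ℂ) ≠ 0 := by exact_mod_cast Real.pi_ne_zero
      exact mul_ne_zero two_ne_zero this
    rw [intervalIntegral.integral_const_mul, hmass, eq_comm, mul_comm, mul_assoc,
      mul_inv_cancel₀ h2πc, mul_one]
  have hdiff : cauchyT f t z - g θ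
      = (2*π:ℂ)⁻¹ * ∫ φ in (0:ℝ)..(2*π), (g φ - g θ) * K φ := by
    have h2πc : (2*(π:ℂ)) ≠ 0 := by
      have : (π:ℂ) ≠ 0 := by exact_mod_cast Real.pi_ne_zero
      exact mul_ne_zero two_ne_zero this
    have hsub : (∫ φ in (0:ℝ)..(2*π), (g φ - g θ) * K φ)
        = (∫ φ in (0:ℝ)..(2*π), g φ * K φ) - g θ * (2*π) := by
      have hpt : ∀ φ : ℝ, (g φ - g θ) * K φ = g φ * K φ - g θ * K φ := fun φ => by ring
      rw [intervalIntegral.integral_congr (fun φ _ => hpt φ),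
        intervalIntegral.integral_sub (f := fun φ => g φ * K φ) (g := fun φ => g θ * K φ)
          ((hgc.mul hKcont).intervalIntegrable _ _)
          ((continuous_const.mul hKcont).intervalIntegrable _ _),
        intervalIntegral.integral_const_mul, hmass]
    rw [hsub, mul_sub, ← hrep]
    congr 1
    rw [mul_comm (g θ), ← mul_assoc, inv_mul_cancel₀ h2πc, one_mul]
  -- shift the integral
  set Φ : ℝ → ℂ := fun φ => (g φ - g θ) * K φ with hΦdef
  have hΦper : Function.Periodic Φ (2*π) := by
    intro φ
    have hgper : g (φ + 2*π) = g φ := congrArg f (periodic_circleMap 0 t φ)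
    have hKper : K (φ + 2*π) = K φ := by
      have h9 := exp_neg_per φ
      simp only [hKdef]
      rw [h9]
    simp only [hΦdef, hgper, hKper]
  have hΦcont : Continuous Φ := (hgc.sub continuous_const).mul hKcont
  have hshift : (∫ φ in (0:ℝ)..(2*π), Φ φ) = ∫ x in (-π)..π, Φ (θ + x) := by
    have h1 := hΦper.intervalIntegral_add_eq (θ - π) 0
    rw [zero_add] at h1
    rw [show θ - π + 2*π = θ + π by ring] at h1
    rw [← h1]
    rw [intervalIntegral.integral_comp_add_left (f := Φ) θ]
    congr 1 <;> ring
  -- identify the shifted kernel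
  have hKshift : ∀ x : ℝ, K (θ + x) = ((P x : ℝ) : ℂ) := by
    intro x
    rw [hKdef, hPdef]
    simp only []
    congr 1
    have hnsq : Complex.normSq (z/t) = s^2 := by
      rw [hw0, Complex.normSq_mul]
      have h1 : Complex.normSq (Complex.exp ((θ:ℂ)*I)) = 1 := by
        rw [Complex.normSq_eq_norm_sq, show ‖Complex.exp ((θ:ℂ)*I)‖ = 1
          from norm_exp_pos θ]
        norm_num
      rw [h1, mul_one, Complex.normSq_ofReal, sq]
    have hker : (1 : ℂ) - (z/t) * Complex.exp (-((θ+x:ℝ):ℂ)*I)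
        = 1 - (s:ℂ) * Complex.exp (-(x:ℂ)*I) := by
      rw [hw0]
      congr 1
      rw [mul_assoc, ← Complex.exp_add]
      congr 1
      push_cast
      ring
    rw [hnsq, hker, normSq_one_sub_exp]
  -- main estimate
  have hXbound : ‖∫ x in (-π)..π, Φ (θ + x)‖
      ≤ ∫ x in (-π)..π, ‖g (θ + x) - g θ‖ * P x := by
    have h1 := intervalIntegral.norm_integral_le_integral_norm
      (μ := MeasureTheory.volume) (f := fun x => Φ (θ + x)) (a := -π) (b := π)
      (by linarith [Real.pi_pos])
    apply le_trans h1
    apply le_of_eq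
    apply intervalIntegral.integral_congr
    intro x _
    simp only [hΦdef]
    rw [hKshift x, norm_mul, Complex.norm_real, Real.norm_eq_abs, _root_.abs_of_nonneg (hPnn x)]
  -- split and bound the real integral
  have hnc : Continuous (fun x : ℝ => ‖g (θ + x) - g θ‖ * P x) := by
    apply Continuous.mul _ hPc
    exact ((hgc.comp (continuous_const.add continuous_id)).sub continuous_const).norm
  have hint : ∀ a b : ℝ, IntervalIntegrable (fun x : ℝ => ‖g (θ + x) - g θ‖ * P x)
      MeasureTheory.volume a b := fun a b => hnc.intervalIntegrable a b
  have hsplit : (∫ x in (-π)..π, ‖g (θ + x) - g θ‖ * P x)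
      = (∫ x in (-π)..(-δ), ‖g (θ + x) - g θ‖ * P x)
        + (∫ x in (-δ)..δ, ‖g (θ + x) - g θ‖ * P x)
        + (∫ x in δ..π, ‖g (θ + x) - g θ‖ * P x) := by
    have hA3 := (intervalIntegral.integral_add_adjacent_intervals
      (hint (-π) (-δ)) (hint (-δ) π)).symm
    have hA4 := (intervalIntegral.integral_add_adjacent_intervals
      (hint (-δ) δ) (hint δ π)).symm
    rw [hA3, hA4, ← add_assoc]
  have hPint : ∀ a b : ℝ, IntervalIntegrable P MeasureTheory.volume a b :=
    fun a b => hPc.intervalIntegrable a b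
  have hPmass : (∫ x in (-π)..π, P x) = 2*π := by
    have hPper : Function.Periodic P (2*π) := by
      intro x
      simp only [hPdef, Real.cos_add_two_pi]
    have h1 := hPper.intervalIntegral_add_eq (-π) 0
    rw [zero_add, show -π + 2*π = π by ring] at h1
    rw [h1]
    have h2 : ∀ x : ℝ, P x = (1 - Complex.normSq ((s:ℝ):ℂ)) /
        Complex.normSq (1 - ((s:ℝ):ℂ) * Complex.exp (-(x:ℂ) * I)) := by
      intro x
      rw [hPdef]
      simp only []
      rw [normSq_one_sub_exp, Complex.normSq_ofReal, sq]
    rw [intervalIntegral.integral_congr (fun x _ => h2 x)]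
    exact poisson_mass_real ((s:ℝ):ℂ) hsC
  have hB2 : (∫ x in (-δ)..δ, ‖g (θ + x) - g θ‖ * P x) ≤ (ε/2) * (2*π) := by
    have step1 : (∫ x in (-δ)..δ, ‖g (θ + x) - g θ‖ * P x)
        ≤ ∫ x in (-δ)..δ, (ε/2) * P x := by
      apply intervalIntegral.integral_mono_on (by linarith) (hint _ _)
        ((continuous_const.mul hPc).intervalIntegrable _ _)
      intro x hx
      apply mul_le_mul_of_nonneg_right _ (hPnn x)
      apply hδH
      rw [abs_le]
      exact ⟨by linarith [hx.1, hδδ₁], by linarith [hx.2, hδδ₁]⟩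
    apply le_trans step1
    rw [intervalIntegral.integral_const_mul]
    apply mul_le_mul_of_nonneg_left _ (by positivity)
    rw [← hPmass]
    apply intervalIntegral.integral_mono_interval (by linarith) (by linarith) hδπ
      (MeasureTheory.ae_of_all _ (fun x => hPnn x)) (hPint _ _)
  have hB1 : (∫ x in (-π)..(-δ), ‖g (θ + x) - g θ‖ * P x) ≤ π * (2*M*ψ s) := by
    have step1 : (∫ x in (-π)..(-δ), ‖g (θ + x) - g θ‖ * P x)
        ≤ ∫ _x in (-π)..(-δ), 2*M*ψ s := by
      apply intervalIntegral.integral_mono_on (by linarith) (hint _ _)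
        intervalIntegrable_const
      intro x hx
      have hgb : ‖g (θ + x) - g θ‖ ≤ 2*M := by
        calc ‖g (θ + x) - g θ‖ ≤ ‖g (θ + x)‖ + ‖g θ‖ := norm_sub_le _ _
          _ ≤ 2*M := by linarith [hMg (θ + x), hMg θ]
      have hPb : P x ≤ ψ s := by
        apply hPfar x
        · rw [_root_.abs_of_nonpos (by linarith [hx.2])]; linarith [hx.2]
        · rw [_root_.abs_of_nonpos (by linarith [hx.2])]; linarith [hx.1]
      calc ‖g (θ + x) - g θ‖ * P x ≤ (2*M) * P x :=
            mul_le_mul_of_nonneg_right hgb (hPnn x)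
        _ ≤ (2*M) * ψ s := mul_le_mul_of_nonneg_left hPb (by positivity)
        _ = 2*M*ψ s := by ring
    apply le_trans step1
    rw [intervalIntegral.integral_const, smul_eq_mul]
    have : -δ - -π = π - δ := by ring
    rw [this]
    apply mul_le_mul_of_nonneg_right (by linarith) (by positivity)
  have hB3 : (∫ x in δ..π, ‖g (θ + x) - g θ‖ * P x) ≤ π * (2*M*ψ s) := by
    have step1 : (∫ x in δ..π, ‖g (θ + x) - g θ‖ * P x)
        ≤ ∫ _x in δ..π, 2*M*ψ s := by
      apply intervalIntegral.integral_mono_on hδπ (hint _ _) intervalIntegrable_const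
      intro x hx
      have hgb : ‖g (θ + x) - g θ‖ ≤ 2*M := by
        calc ‖g (θ + x) - g θ‖ ≤ ‖g (θ + x)‖ + ‖g θ‖ := norm_sub_le _ _
          _ ≤ 2*M := by linarith [hMg (θ + x), hMg θ]
      have hPb : P x ≤ ψ s := by
        apply hPfar x
        · rw [_root_.abs_of_nonneg (by linarith [hx.1])]; exact hx.1
        · rw [_root_.abs_of_nonneg (by linarith [hx.1])]; exact hx.2
      calc ‖g (θ + x) - g θ‖ * P x ≤ (2*M) * P x :=
            mul_le_mul_of_nonneg_right hgb (hPnn x)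
        _ ≤ (2*M) * ψ s := mul_le_mul_of_nonneg_left hPb (by positivity)
        _ = 2*M*ψ s := by ring
    apply le_trans step1
    rw [intervalIntegral.integral_const, smul_eq_mul]
    apply mul_le_mul_of_nonneg_right (by linarith) (by positivity)
  -- put it together
  have hnorm2π : ‖(2*π:ℂ)⁻¹‖ = (2*π)⁻¹ := by
    rw [norm_inv]
    congr 1
    rw [show (2*(π:ℂ)) = ((2*π:ℝ):ℂ) by push_cast; ring, Complex.norm_real,
      Real.norm_eq_abs, abs_of_pos (by positivity)]
  have hfinal : ‖cauchyT f t z - g θ‖ ≤ (2*π)⁻¹ * ((ε/2)*(2*π) + 2*(π * (2*M*ψ s))) := by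
    rw [hdiff, norm_mul, hnorm2π]
    apply mul_le_mul_of_nonneg_left _ (by positivity)
    rw [show (∫ φ in (0:ℝ)..(2*π), (g φ - g θ) * K φ) = ∫ φ in (0:ℝ)..(2*π), Φ φ from rfl,
      hshift]
    apply le_trans hXbound
    rw [hsplit] at *
    linarith [hB1, hB2, hB3]
  have h2π : (0:ℝ) < 2*π := by positivity
  have hψε : 2*M*ψ s ≤ ε/2 := by
    have h1 : 2*M*ψ s ≤ 2*M*(ε/(4*M+1)) := mul_le_mul_of_nonneg_left hψs.le (by positivity)
    have h2 : 2*M*(ε/(4*M+1)) ≤ ε/2 := by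
      rw [mul_div_assoc', div_le_div_iff₀ (by positivity) (by norm_num)]
      nlinarith
    linarith
  calc ‖cauchyT f t z - g θ‖ ≤ (2*π)⁻¹ * ((ε/2)*(2*π) + 2*(π * (2*M*ψ s))) := hfinal
    _ = ε/2 + 2*M*ψ s := by
        rw [show (ε/2)*(2*π) + 2*(π * (2*M*ψ s)) = (ε/2 + 2*M*ψ s)*(2*π) by ring,
          mul_comm ((2*π:ℝ))⁻¹, mul_assoc, mul_inv_cancel₀ h2π.ne', mul_one]
    _ ≤ ε := by linarith

lemma forward_direction (t : ℝ) (ht : 0 < t) (f : ℂ → ℂ)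
    (F : ℂ → ℂ) (hFc : ContinuousOn F (closedBall (0:ℂ) t))
    (hFd : DifferentiableOn ℂ F (ball (0:ℂ) t))
    (hFeq : ∀ z ∈ sphere (0:ℂ) t, F z = f z) :
    ∀ k : ℕ, ∫ θ in (0:ℝ)..(2 * π),
      f ((t : ℂ) * Complex.exp (θ * Complex.I)) *
        Complex.exp ((k + 1 : ℕ) * θ * Complex.I) = 0 := by
  intro k
  have hcont : ContinuousOn (fun z => F z * z^k) (closedBall (0:ℂ) t) :=
    hFc.mul ((continuous_pow k).continuousOn)
  have hdiff : ∀ z ∈ ball (0:ℂ) t \ (∅ : Set ℂ), DifferentiableAt ℂ (fun z => F z * z^k) z := by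
    intro z hz
    have h1 : DifferentiableAt ℂ F z :=
      (hFd z hz.1).differentiableAt (isOpen_ball.mem_nhds hz.1)
    exact h1.mul (differentiableAt_pow k)
  have h0 := Complex.circleIntegral_eq_zero_of_differentiable_on_off_countable ht.le
    Set.countable_empty hcont hdiff
  have key : ∀ θ : ℝ, deriv (circleMap 0 t) θ • (F (circleMap 0 t θ) * (circleMap 0 t θ)^k)
      = (I * (t:ℂ)^(k+1)) *
        (f ((t : ℂ) * Complex.exp ((θ:ℂ) * I)) * Complex.exp ((k + 1 : ℕ) * (θ:ℂ) * I)) := by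
    intro θ
    have hexp : Complex.exp (((k + 1 : ℕ) : ℂ) * (θ:ℂ) * I) = (Complex.exp ((θ:ℂ)*I))^(k+1) := by
      rw [← Complex.exp_nat_mul]
      ring_nf
    rw [deriv_circleMap, hFeq _ (circleMap_mem_sphere 0 ht.le θ), circleMap_eq t θ,
      smul_eq_mul, hexp]
    ring
  have h2 : (∮ z in C(0, t), F z * z^k)
      = ∫ θ in (0:ℝ)..(2*π), (I * (t:ℂ)^(k+1)) *
          (f ((t : ℂ) * Complex.exp ((θ:ℂ) * I)) * Complex.exp ((k + 1 : ℕ) * (θ:ℂ) * I)) := by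
    rw [circleIntegral]
    exact intervalIntegral.integral_congr (fun θ _ => key θ)
  rw [intervalIntegral.integral_const_mul] at h2
  have h3 : (I * (t:ℂ)^(k+1)) *
      (∫ θ in (0:ℝ)..(2*π),
        f ((t : ℂ) * Complex.exp ((θ:ℂ) * I)) * Complex.exp ((k + 1 : ℕ) * (θ:ℂ) * I)) = 0 := by
    rw [← h2, h0]
  have hne : (I * (t:ℂ)^(k+1)) ≠ 0 := by
    apply mul_ne_zero I_ne_zero
    apply pow_ne_zero
    exact_mod_cast ht.ne'
  exact (mul_eq_zero.mp h3).resolve_left hne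

theorem holomorphic_extension_iff_moment_condition
    (t : ℝ) (ht : 0 < t) (f : ℂ → ℂ)
    (hf : ContinuousOn f (sphere (0 : ℂ) t)) :
    (∃ F : ℂ → ℂ,
        ContinuousOn F (closedBall (0 : ℂ) t) ∧
        DifferentiableOn ℂ F (ball (0 : ℂ) t) ∧
        ∀ z ∈ sphere (0 : ℂ) t, F z = f z) ↔
      (∀ k : ℕ,
        ∫ θ in (0:ℝ)..(2 * π),
          f ((t : ℂ) * Complex.exp (θ * Complex.I)) *
            Complex.exp ((k + 1 : ℕ) * θ * Complex.I) = 0) := by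
  constructor
  · rintro ⟨F, hFc, hFd, hFeq⟩
    exact forward_direction t ht f F hFc hFd hFeq
  · intro hmom
    set F : ℂ → ℂ := fun z => if ‖z‖ < t then cauchyT f t z else f z with hFdef
    have hFball : ∀ z ∈ ball (0:ℂ) t, F z = cauchyT f t z := by
      intro z hz
      rw [mem_ball_zero_iff] at hz
      simp only [hFdef, if_pos hz]
    have hFsphere : ∀ z ∈ sphere (0:ℂ) t, F z = f z := by
      intro z hz
      rw [mem_sphere_zero_iff_norm] at hz
      simp only [hFdef, hz, lt_irrefl, if_false]
    have hTd := cauchyT_differentiableOn t ht f hf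
    have hTc : ContinuousOn (cauchyT f t) (ball (0:ℂ) t) := hTd.continuousOn
    have hmaps : ∀ s : ℝ, 0 < s → s < 1 → Set.MapsTo (fun z : ℂ => (s:ℂ) * z)
        (closedBall (0:ℂ) t) (ball (0:ℂ) t) := by
      intro s hs0 hs1 z hz
      rw [mem_closedBall_zero_iff] at hz
      show (s:ℂ)*z ∈ ball (0:ℂ) t
      rw [mem_ball_zero_iff, norm_mul, Complex.norm_real, Real.norm_eq_abs,
        abs_of_pos hs0]
      nlinarith [norm_nonneg z]
    have hmaps2 : ∀ s : ℝ, 0 < s → s < 1 → Set.MapsTo (fun z : ℂ => (s:ℂ) * z)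
        (ball (0:ℂ) t) (ball (0:ℂ) t) :=
      fun s hs0 hs1 => (hmaps s hs0 hs1).mono_left ball_subset_closedBall
    have hFscont : ∀ s : ℝ, 0 < s → s < 1 →
        ContinuousOn (fun z : ℂ => cauchyT f t ((s:ℂ) * z)) (closedBall (0:ℂ) t) :=
      fun s hs0 hs1 => hTc.comp (continuous_const.mul continuous_id).continuousOn
        (hmaps s hs0 hs1)
    have hbd : ∀ z : ℂ, ‖z‖ = t → ∃ θ : ℝ, z = circleMap 0 t θ := by
      intro z hz
      have ht0 : (t:ℂ) ≠ 0 := by exact_mod_cast ht.ne'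
      have habs : ‖z / t‖ = 1 := by
        rw [norm_div, hz, Complex.norm_real, Real.norm_eq_abs, abs_of_pos ht,
          div_self ht.ne']
      obtain ⟨θ, hθ⟩ := (Complex.norm_eq_one_iff _).mp habs
      refine ⟨θ, ?_⟩
      rw [circleMap_eq, hθ]
      field_simp
    have hkey2 : ∀ s s' : ℝ, 0 < s → s < 1 → 0 < s' → s' < 1 → ∀ C : ℝ,
        (∀ θ : ℝ, ‖cauchyT f t ((s:ℂ) * circleMap 0 t θ) - f (circleMap 0 t θ)‖ ≤ C) →
        (∀ θ : ℝ, ‖cauchyT f t ((s':ℂ) * circleMap 0 t θ) - f (circleMap 0 t θ)‖ ≤ C) →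
        ∀ z ∈ closedBall (0:ℂ) t,
          ‖cauchyT f t ((s:ℂ)*z) - cauchyT f t ((s':ℂ)*z)‖ ≤ 2*C := by
      intro s s' hs0 hs1 hs0' hs1' C h1 h2 z hz
      set h : ℂ → ℂ := fun w => cauchyT f t ((s:ℂ)*w) - cauchyT f t ((s':ℂ)*w) with hhdef
      have hd1 : ∀ σ : ℝ, 0 < σ → σ < 1 →
          DifferentiableOn ℂ (fun w : ℂ => cauchyT f t ((σ:ℂ)*w)) (ball (0:ℂ) t) :=
        fun σ hσ0 hσ1 => hTd.comp ((differentiable_const _).mul differentiable_id).differentiableOn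
          (hmaps2 σ hσ0 hσ1)
      have hdc : DiffContOnCl ℂ h (ball (0:ℂ) t) := by
        constructor
        · exact (hd1 s hs0 hs1).sub (hd1 s' hs0' hs1')
        · rw [closure_ball (0:ℂ) ht.ne']
          exact (hFscont s hs0 hs1).sub (hFscont s' hs0' hs1')
      have hb : ∀ w ∈ frontier (ball (0:ℂ) t), ‖h w‖ ≤ 2*C := by
        intro w hw
        rw [frontier_ball (0:ℂ) ht.ne', mem_sphere_zero_iff_norm] at hw
        obtain ⟨θ, hθ⟩ := hbd w hw
        have : h w = (cauchyT f t ((s:ℂ)*w) - f w) - (cauchyT f t ((s':ℂ)*w) - f w) := by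
          rw [hhdef]; ring
        rw [this]
        calc ‖(cauchyT f t ((s:ℂ)*w) - f w) - (cauchyT f t ((s':ℂ)*w) - f w)‖
            ≤ ‖cauchyT f t ((s:ℂ)*w) - f w‖ + ‖cauchyT f t ((s':ℂ)*w) - f w‖ :=
              norm_sub_le _ _
          _ ≤ C + C := by
              rw [hθ]
              exact add_le_add (h1 θ) (h2 θ)
          _ = 2*C := by ring
      have := Complex.norm_le_of_forall_mem_frontier_norm_le isBounded_ball hdc hb
        (z := z) (by rw [closure_ball (0:ℂ) ht.ne']; exact hz)
      exact this
    have hlim : ∀ z ∈ ball (0:ℂ) t, Tendsto (fun s' : ℝ => cauchyT f t ((s':ℂ)*z))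
        (𝓝[<] (1:ℝ)) (𝓝 (cauchyT f t z)) := by
      intro z hz
      have hca : ContinuousAt (cauchyT f t) z :=
        hTc.continuousAt (isOpen_ball.mem_nhds hz)
      have hmul : Tendsto (fun s' : ℝ => ((s':ℝ):ℂ) * z) (𝓝 (1:ℝ)) (𝓝 z) := by
        have := (Complex.continuous_ofReal.tendsto (1:ℝ)).mul_const z
        simpa using this
      exact (hca.tendsto.comp hmul).mono_left nhdsWithin_le_nhds
    refine ⟨F, ?_, hTd.congr hFball, hFsphere⟩
    have hunif : TendstoUniformlyOn (fun (s : ℝ) (z : ℂ) => cauchyT f t ((s:ℂ) * z)) F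
        (𝓝[<] (1:ℝ)) (closedBall (0:ℂ) t) := by
      rw [Metric.tendstoUniformlyOn_iff]
      intro ε hε
      have happrox := cauchyT_boundary_approx t ht f hf hmom (ε/3) (by positivity)
      filter_upwards [happrox] with s hs
      obtain ⟨hs0, hs1, hsapp⟩ := hs
      intro z hz
      have hz' : ‖z‖ ≤ t := mem_closedBall_zero_iff.mp hz
      rw [dist_eq_norm]
      rcases eq_or_lt_of_le hz' with heq | hlt
      · -- boundary point
        obtain ⟨θ, hθ⟩ := hbd z heq
        have hFz : F z = f z := hFsphere z (mem_sphere_zero_iff_norm.mpr heq)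
        rw [hFz, norm_sub_rev, hθ]
        calc ‖cauchyT f t ((s:ℂ) * circleMap 0 t θ) - f (circleMap 0 t θ)‖ ≤ ε/3 := hsapp θ
          _ < ε := by linarith
      · -- interior point
        have hzball : z ∈ ball (0:ℂ) t := mem_ball_zero_iff.mpr hlt
        have hFz : F z = cauchyT f t z := hFball z hzball
        rw [hFz]
        have hev : ∀ᶠ s' : ℝ in 𝓝[<] (1:ℝ),
            ‖cauchyT f t ((s:ℂ)*z) - cauchyT f t ((s':ℂ)*z)‖ ≤ 2*(ε/3) := by
          filter_upwards [happrox] with s' hs'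
          obtain ⟨hs0', hs1', happ'⟩ := hs'
          exact hkey2 s s' hs0 hs1 hs0' hs1' (ε/3) hsapp happ' z hz
        have htd : Tendsto (fun s' : ℝ => ‖cauchyT f t ((s:ℂ)*z) - cauchyT f t ((s':ℂ)*z)‖)
            (𝓝[<] (1:ℝ)) (𝓝 ‖cauchyT f t ((s:ℂ)*z) - cauchyT f t z‖) :=
          (tendsto_const_nhds.sub (hlim z hzball)).norm
        have hle := le_of_tendsto htd hev
        rw [norm_sub_rev] at hle
        calc ‖cauchyT f t z - cauchyT f t ((s:ℂ)*z)‖ ≤ 2*(ε/3) := hle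
          _ < ε := by linarith
    apply hunif.continuousOn
    apply Filter.Eventually.frequently
    filter_upwards [eventually_nhdsWithin_of_eventually_nhds
      (eventually_gt_nhds (by norm_num : (1/2:ℝ) < 1)), eventually_mem_nhdsWithin] with s hs2 hs1
    exact hFscont s (by linarith) hs1
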